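/- Let ρ_H on [0,1] × [0,∞) be defined by ρ_H((v,x),(v',x')) := (|v−v'| ∨ |x−x'|) ∧ (1 − v∧v'). Then ρ_H((v,x),(v',x')) equals the Hausdorff distance (with respect to the ℓ∞ norm on ℝ²) between the sets {(v,x)} ∪ ({1} × [0,∞)) and {(v',x')} ∪ ({1} × [0,∞)). -/

import Mathlib

set_option autoImplicit false

open Set

/-- The formula `ρ_H((v,x),(v',x')) = (|v−v'| ∨ |x−x'|) ∧ (1 − v∧v')` computes the Hausdorff
distance (with respect to the `ℓ∞` norm on `ℝ²`, i.e. the product metric on `ℝ × ℝ`) between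
the sets `{(v,x)} ∪ ({1} × [0,∞))` and `{(v',x')} ∪ ({1} × [0,∞))`. -/
theorem rhoH_eq_hausdorffDist (v v' x x' : ℝ)
    (hv : v ∈ Icc (0 : ℝ) 1) (hv' : v' ∈ Icc (0 : ℝ) 1) (hx : 0 ≤ x) (hx' : 0 ≤ x') :
    Metric.hausdorffDist
      (({(v, x)} : Set (ℝ × ℝ)) ∪ {(1 : ℝ)} ×ˢ Ici (0 : ℝ))
      (({(v', x')} : Set (ℝ × ℝ)) ∪ {(1 : ℝ)} ×ˢ Ici (0 : ℝ))
      = min (max |v - v'| |x - x'|) (1 - min v v') := by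
  obtain ⟨hv0, hv1⟩ := hv
  obtain ⟨hv'0, hv'1⟩ := hv'
  set L : Set (ℝ × ℝ) := {(1 : ℝ)} ×ˢ Ici (0 : ℝ) with hL
  set A : Set (ℝ × ℝ) := ({(v, x)} : Set (ℝ × ℝ)) ∪ L with hA
  set B : Set (ℝ × ℝ) := ({(v', x')} : Set (ℝ × ℝ)) ∪ L with hB
  set d : ℝ := max |v - v'| |x - x'| with hd
  have hd0 : 0 ≤ d := le_trans (abs_nonneg _) (le_max_left _ _)
  have hdist : dist ((v, x) : ℝ × ℝ) ((v', x') : ℝ × ℝ) = d := by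
    simp [Prod.dist_eq, Real.dist_eq, hd]
  have hAne : A.Nonempty := ⟨(v, x), Or.inl rfl⟩
  have hBne : B.Nonempty := ⟨(v', x'), Or.inl rfl⟩
  have hmemA : ((v, x) : ℝ × ℝ) ∈ A := Or.inl rfl
  have hmemB : ((v', x') : ℝ × ℝ) ∈ B := Or.inl rfl
  -- distance from (w,y) to a line point (1,z)
  have hdistL : ∀ (w y z : ℝ), w ≤ 1 → dist ((w, y) : ℝ × ℝ) ((1, z) : ℝ × ℝ)
      = max (1 - w) |y - z| := by
    intro w y z hw
    simp [Prod.dist_eq, Real.dist_eq, abs_of_nonpos (by linarith : w - 1 ≤ 0)]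
  -- the Hausdorff edistance is finite
  have hfin : EMetric.hausdorffEdist A B ≠ ⊤ := by
    have hle : EMetric.hausdorffEdist A B ≤ edist ((v, x) : ℝ × ℝ) ((v', x') : ℝ × ℝ) := by
      apply EMetric.hausdorffEdist_le_of_infEdist
      · rintro p (rfl | hp)
        · exact EMetric.infEdist_le_edist_of_mem hmemB
        · have hpB : p ∈ B := Or.inr hp
          rw [EMetric.infEdist_zero_of_mem hpB]
          exact zero_le
      · rintro p (rfl | hp)
        · rw [edist_comm]
          exact EMetric.infEdist_le_edist_of_mem hmemA
        · have hpA : p ∈ A := Or.inr hp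
          rw [EMetric.infEdist_zero_of_mem hpA]
          exact zero_le
    exact ne_top_of_le_ne_top (edist_ne_top _ _) hle
  have hfin' : EMetric.hausdorffEdist B A ≠ ⊤ := by
    unfold EMetric.hausdorffEdist at hfin ⊢
    rwa [EMetric.hausdorffEdist_comm]
  -- generic computation of infDist to such a set
  have key : ∀ (w y w' y' : ℝ), 0 ≤ w → w ≤ 1 → 0 ≤ y → 0 ≤ w' → w' ≤ 1 → 0 ≤ y' →
      Metric.infDist ((w, y) : ℝ × ℝ) (({(w', y')} : Set (ℝ × ℝ)) ∪ L)
        = min (max |w - w'| |y - y'|) (1 - w) := by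
    intro w y w' y' hw0 hw1 hy0 hw'0 hw'1 hy'0
    have hSne : (({(w', y')} : Set (ℝ × ℝ)) ∪ L).Nonempty := ⟨(w', y'), Or.inl rfl⟩
    apply le_antisymm
    · apply le_min
      · have : dist ((w, y) : ℝ × ℝ) ((w', y') : ℝ × ℝ) = max |w - w'| |y - y'| := by
          simp [Prod.dist_eq, Real.dist_eq]
        rw [← this]
        exact Metric.infDist_le_dist_of_mem (Or.inl rfl)
      · have hm : ((1, y) : ℝ × ℝ) ∈ ({(w', y')} : Set (ℝ × ℝ)) ∪ L := by
          exact Or.inr ⟨rfl, hy0⟩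
        have := Metric.infDist_le_dist_of_mem (x := ((w, y) : ℝ × ℝ)) hm
        rwa [hdistL w y y hw1, sub_self, abs_zero, max_eq_left (by linarith)] at this
    · by_contra h
      push_neg at h
      rw [Metric.infDist_lt_iff hSne] at h
      obtain ⟨q, hq, hqlt⟩ := h
      rcases hq with rfl | hq
      · have : dist ((w, y) : ℝ × ℝ) ((w', y') : ℝ × ℝ) = max |w - w'| |y - y'| := by
          simp [Prod.dist_eq, Real.dist_eq]
        rw [this] at hqlt
        exact absurd hqlt (not_lt.2 (min_le_left _ _))
      · obtain ⟨hq1, hq2⟩ := hq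
        obtain ⟨a, b⟩ := q
        simp only at hq1 hq2
        subst hq1
        rw [hdistL w y b hw1] at hqlt
        have : 1 - w ≤ max (1 - w) |y - b| := le_max_left _ _
        have h2 : min (max |w - w'| |y - y'|) (1 - w) ≤ 1 - w := min_le_right _ _
        linarith [lt_of_le_of_lt (le_trans h2 this) hqlt]
  apply le_antisymm
  · apply Metric.hausdorffDist_le_of_infDist
    · exact le_min hd0 (by rcases min_cases v v' with ⟨h, _⟩ | ⟨h, _⟩ <;> rw [h] <;> linarith)
    · rintro p (rfl | hp)
      · rw [show B = ({(v', x')} : Set (ℝ × ℝ)) ∪ L from rfl,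
          key v x v' x' hv0 hv1 hx hv'0 hv'1 hx']
        apply min_le_min le_rfl
        rcases min_cases v v' with ⟨h, h2⟩ | ⟨h, h2⟩ <;> rw [h] <;> linarith
      · have hpB : p ∈ B := Or.inr hp
        rw [Metric.infDist_zero_of_mem hpB]
        exact le_min hd0 (by rcases min_cases v v' with ⟨h, _⟩ | ⟨h, _⟩ <;> rw [h] <;> linarith)
    · rintro p (rfl | hp)
      · rw [show A = ({(v, x)} : Set (ℝ × ℝ)) ∪ L from rfl,
          key v' x' v x hv'0 hv'1 hx' hv0 hv1 hx]
        have habs : |v' - v| = |v - v'| := abs_sub_comm _ _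
        have habs2 : |x' - x| = |x - x'| := abs_sub_comm _ _
        rw [habs, habs2]
        apply min_le_min le_rfl
        rcases min_cases v v' with ⟨h, h2⟩ | ⟨h, h2⟩ <;> rw [h] <;> linarith
      · have hpA : p ∈ A := Or.inr hp
        rw [Metric.infDist_zero_of_mem hpA]
        exact le_min hd0 (by rcases min_cases v v' with ⟨h, _⟩ | ⟨h, _⟩ <;> rw [h] <;> linarith)
  · have h1 : min d (1 - v) ≤ Metric.hausdorffDist A B := by
      have := Metric.infDist_le_hausdorffDist_of_mem hmemA hfin
      rwa [show B = ({(v', x')} : Set (ℝ × ℝ)) ∪ L from rfl,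
        key v x v' x' hv0 hv1 hx hv'0 hv'1 hx'] at this
    have h2 : min d (1 - v') ≤ Metric.hausdorffDist A B := by
      have := Metric.infDist_le_hausdorffDist_of_mem hmemB hfin'
      rw [show A = ({(v, x)} : Set (ℝ × ℝ)) ∪ L from rfl,
        key v' x' v x hv'0 hv'1 hx' hv0 hv1 hx,
        abs_sub_comm v' v, abs_sub_comm x' x, Metric.hausdorffDist_comm] at this
      exact this
    rcases le_total v v' with h | h
    · rw [min_eq_left h]; exact h1
    · rw [min_eq_right h]; exact h2
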